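/- Let {F_α} be a Følner net for a discrete group G, i.e., each F_α is a finite nonempty subset and |gF_α △ F_α|/|F_α| → 0 for every g ∈ G. Define φ_α(g) = |gF_α ∩ F_α|/|F_α|. Then each φ_α is a positive definite function on G with φ_α(e) = 1, the support of φ_α equals F_α · F_α⁻¹, and φ_α(g) → 1 for every g ∈ G. -/

import Mathlib

open scoped ComplexConjugate

/-- `φ : G → ℂ` is positive definite: for all `g₁,…,g_n` and `c₁,…,c_n`, the sum
`Σ_{i,j} c_i conj(c_j) φ(g_j⁻¹ g_i)` is a nonnegative real number. -/
def IsPosDef {G : Type*} [Group G] (φ : G → ℂ) : Prop :=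
  ∀ (n : ℕ) (g : Fin n → G) (c : Fin n → ℂ),
    0 ≤ (∑ i, ∑ j, c i * conj (c j) * φ ((g j)⁻¹ * g i)).re ∧
      (∑ i, ∑ j, c i * conj (c j) * φ ((g j)⁻¹ * g i)).im = 0

/-- `ψ : G → ℝ` is negative definite: `ψ(g⁻¹) = ψ(g)` and, whenever `Σ c_i = 0`,
the sum `Σ_{i,j} c_i conj(c_j) ψ(g_j⁻¹ g_i)` is a nonpositive real number. -/
def IsNegDef {G : Type*} [Group G] (ψ : G → ℝ) : Prop :=
  (∀ g : G, ψ g⁻¹ = ψ g) ∧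
    ∀ (n : ℕ) (g : Fin n → G) (c : Fin n → ℂ), (∑ i, c i) = 0 →
      (∑ i, ∑ j, c i * conj (c j) * (ψ ((g j)⁻¹ * g i) : ℂ)).re ≤ 0 ∧
        (∑ i, ∑ j, c i * conj (c j) * (ψ ((g j)⁻¹ * g i) : ℂ)).im = 0

open Filter

/-- For a Følner net `{F_α}` in `G`, the functions
`φ_α(g) = |gF_α ∩ F_α| / |F_α|` are normalized positive definite functions with
support `F_α · F_α⁻¹`, converging pointwise to `1`. -/
theorem folner_net_gives_pd_approx_unit {G : Type*} [Group G] [DecidableEq G]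
    {ι : Type*} (l : Filter ι) [l.NeBot] (F : ι → Finset G)
    (hne : ∀ α, (F α).Nonempty)
    (hFol : ∀ g : G, Tendsto
      (fun α => ((symmDiff ((F α).image fun x => g * x) (F α)).card : ℝ) / (F α).card)
      l (nhds 0))
    (φ : ι → G → ℝ)
    (hφ : ∀ α (g : G),
      φ α g = ((((F α).image fun x => g * x) ∩ F α).card : ℝ) / (F α).card) :
    (∀ α, IsPosDef fun g : G => (φ α g : ℂ)) ∧
      (∀ α, φ α 1 = 1) ∧
      (∀ α (g : G), φ α g ≠ 0 ↔ ∃ s ∈ F α, ∃ t ∈ F α, g = s * t⁻¹) ∧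
      (∀ g : G, Tendsto (fun α => φ α g) l (nhds 1)) := by
  have hcardpos : ∀ α, (0:ℝ) < (F α).card := fun α => by
    exact_mod_cast Finset.card_pos.2 (hne α)
  refine ⟨?_, ?_, ?_, ?_⟩
  · -- positive definiteness
    intro α n g c
    classical
    set T : Fin n → Finset G := fun i => (F α).image (fun x => g i * x) with hT
    set S : Finset G := Finset.univ.biUnion T with hS
    set ind : Fin n → G → ℂ := fun i x => if x ∈ T i then 1 else 0 with hind
    have hcard : ∀ i j, (((F α).image (fun x => (g j)⁻¹ * g i * x)) ∩ F α).card
        = (T i ∩ T j).card := by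
      intro i j
      have hinj : Function.Injective (fun x : G => g j * x) := mul_right_injective _
      calc (((F α).image (fun x => (g j)⁻¹ * g i * x)) ∩ F α).card
          = ((((F α).image (fun x => (g j)⁻¹ * g i * x)) ∩ F α).image
              (fun x => g j * x)).card := (Finset.card_image_of_injective _ hinj).symm
        _ = (T i ∩ T j).card := by
            congr 1
            rw [Finset.image_inter _ _ hinj]
            congr 1
            · rw [Finset.image_image]
              apply Finset.image_congr
              intro x _
              simp [mul_assoc]
    have hsub : ∀ i, T i ⊆ S := fun i => Finset.subset_biUnion_of_mem T (Finset.mem_univ i)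
    have hcard2 : ∀ i j, ((T i ∩ T j).card : ℂ) = ∑ x ∈ S, ind i x * ind j x := by
      intro i j
      have : ∀ x, ind i x * ind j x = if x ∈ T i ∩ T j then (1:ℂ) else 0 := by
        intro x
        simp only [hind, Finset.mem_inter, ite_and, ite_mul, one_mul, zero_mul]
      simp only [this]
      rw [Finset.sum_ite_mem, Finset.inter_eq_right.2
        (fun x hx => hsub i (Finset.mem_inter.1 hx).1)]
      simp
    have hconjind : ∀ j x, conj (ind j x) = ind j x := by
      intro j x
      simp only [hind, apply_ite conj, map_one, map_zero]
    have key : (∑ i, ∑ j, c i * conj (c j) * ((T i ∩ T j).card : ℂ))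
        = ∑ x ∈ S, (Complex.normSq (∑ i, c i * ind i x) : ℂ) := by
      calc (∑ i, ∑ j, c i * conj (c j) * ((T i ∩ T j).card : ℂ))
          = ∑ i, ∑ j, ∑ x ∈ S, (c i * ind i x) * (conj (c j) * ind j x) := by
            refine Finset.sum_congr rfl fun i _ => Finset.sum_congr rfl fun j _ => ?_
            rw [hcard2 i j, Finset.mul_sum]
            exact Finset.sum_congr rfl fun x _ => by ring
        _ = ∑ x ∈ S, ∑ i, ∑ j, (c i * ind i x) * (conj (c j) * ind j x) := by
            have h1 : ∀ i : Fin n, (∑ j, ∑ x ∈ S, (c i * ind i x) * (conj (c j) * ind j x))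
                = ∑ x ∈ S, ∑ j, (c i * ind i x) * (conj (c j) * ind j x) :=
              fun i => Finset.sum_comm
            rw [Finset.sum_congr rfl fun i _ => h1 i, Finset.sum_comm]
        _ = ∑ x ∈ S, (∑ i, c i * ind i x) * (∑ j, conj (c j) * ind j x) := by
            refine Finset.sum_congr rfl fun x _ => ?_
            exact (Finset.sum_mul_sum _ _ _ _).symm
        _ = ∑ x ∈ S, (Complex.normSq (∑ i, c i * ind i x) : ℂ) := by
            refine Finset.sum_congr rfl fun x _ => ?_
            have : (∑ j, conj (c j) * ind j x) = conj (∑ i, c i * ind i x) := by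
              rw [map_sum]
              exact Finset.sum_congr rfl fun j _ => by rw [map_mul, hconjind]
            rw [this, Complex.mul_conj]
    have total : (∑ i, ∑ j, c i * conj (c j) * ((φ α ((g j)⁻¹ * g i) : ℝ) : ℂ))
        = (((((F α).card : ℝ))⁻¹ * ∑ x ∈ S, Complex.normSq (∑ i, c i * ind i x) : ℝ) : ℂ) := by
      have hφc : ∀ i j, ((φ α ((g j)⁻¹ * g i) : ℝ) : ℂ)
          = ((T i ∩ T j).card : ℂ) * (((F α).card : ℂ))⁻¹ := by
        intro i j
        rw [hφ, ← hcard i j]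
        push_cast
        rw [div_eq_mul_inv]
      calc (∑ i, ∑ j, c i * conj (c j) * ((φ α ((g j)⁻¹ * g i) : ℝ) : ℂ))
          = (∑ i, ∑ j, c i * conj (c j) * ((T i ∩ T j).card : ℂ)) * (((F α).card : ℂ))⁻¹ := by
            rw [Finset.sum_mul]
            refine Finset.sum_congr rfl fun i _ => ?_
            rw [Finset.sum_mul]
            refine Finset.sum_congr rfl fun j _ => ?_
            rw [hφc]; ring
        _ = (∑ x ∈ S, (Complex.normSq (∑ i, c i * ind i x) : ℂ)) * (((F α).card : ℂ))⁻¹ := by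
            rw [key]
        _ = _ := by push_cast; ring
    constructor
    · rw [total, Complex.ofReal_re]
      have h1 : (0:ℝ) ≤ ∑ x ∈ S, Complex.normSq (∑ i, c i * ind i x) :=
        Finset.sum_nonneg fun x _ => Complex.normSq_nonneg _
      have h2 : (0:ℝ) ≤ (((F α).card : ℝ))⁻¹ := by positivity
      exact mul_nonneg h2 h1
    · rw [total, Complex.ofReal_im]
  · -- φ α 1 = 1
    intro α
    rw [hφ]
    simp only [one_mul]
    rw [Finset.image_id', Finset.inter_self, div_self (ne_of_gt (hcardpos α))]
  · -- support
    intro α g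
    rw [hφ]
    rw [div_ne_zero_iff]
    constructor
    · rintro ⟨h1, -⟩
      have : (((F α).image fun x => g * x) ∩ F α).Nonempty := by
        rw [← Finset.card_pos]
        by_contra h
        push_neg at h
        exact h1 (by exact_mod_cast Nat.le_zero.1 h)
      obtain ⟨y, hy⟩ := this
      rw [Finset.mem_inter, Finset.mem_image] at hy
      obtain ⟨⟨t, ht, rfl⟩, hs⟩ := hy
      exact ⟨g * t, hs, t, ht, by group⟩
    · rintro ⟨s, hs, t, ht, rfl⟩
      refine ⟨?_, ne_of_gt (hcardpos α)⟩
      have hmem : s ∈ ((F α).image fun x => s * t⁻¹ * x) ∩ F α := by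
        rw [Finset.mem_inter, Finset.mem_image]
        exact ⟨⟨t, ht, by group⟩, hs⟩
      have : 0 < ((((F α).image fun x => s * t⁻¹ * x) ∩ F α).card : ℝ) := by
        exact_mod_cast Finset.card_pos.2 ⟨s, hmem⟩
      exact ne_of_gt this
  · -- convergence
    intro g
    have h1 : ∀ α, φ α g
        = 1 - ((F α \ ((F α).image fun x => g * x)).card : ℝ) / (F α).card := by
      intro α
      rw [hφ]
      have hnat : ((((F α).image fun x => g * x) ∩ F α).card : ℝ)
          + ((F α \ ((F α).image fun x => g * x)).card : ℝ) = (F α).card := by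
        rw [Finset.inter_comm]
        exact_mod_cast congrArg Nat.cast
          (Finset.card_inter_add_card_sdiff (F α) ((F α).image fun x => g * x))
      rw [eq_sub_iff_add_eq, ← add_div, hnat, div_self (ne_of_gt (hcardpos α))]
    have h2 : Tendsto (fun α => ((F α \ ((F α).image fun x => g * x)).card : ℝ) / (F α).card)
        l (nhds 0) := by
      refine squeeze_zero (fun α => by positivity) (fun α => ?_) (hFol g)
      apply (div_le_div_iff_of_pos_right (hcardpos α)).2
      have hsub : F α \ ((F α).image fun x => g * x)
          ⊆ symmDiff ((F α).image fun x => g * x) (F α) := by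
        intro x hx
        rw [Finset.mem_symmDiff]
        rw [Finset.mem_sdiff] at hx
        exact Or.inr hx
      exact_mod_cast Finset.card_le_card hsub
    have := h2.const_sub 1
    simp only [sub_zero] at this
    convert this using 2 with α
    · exact h1 α
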